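/- Let y : ℝ → ℝ be bounded and continuous on an interval (T_1, ∞), let Q_1, …, Q_m be nonzero univariate polynomials with real algebraic coefficients, and let β_1 > β_2 > … > β_m be real numbers. Suppose that Q_1(y(t))e^{β_1 t} + … + Q_m(y(t))e^{β_m t} = 0 for all t > T_1. Then there exist a root y* of Q_1 (in particular, y* is a real algebraic number), a constant ε > 0 and T_2 > T_1 such that |y(t) − y*| < e^{−ε t} for all t > T_2; in particular, lim_{t→∞} y(t) = y*. -/

import Mathlib

open Polynomial

lemma isAlgebraic_of_root_algCoeffs (p : Polynomial ℝ) (hp : p ≠ 0)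
    (halg : ∀ k, IsAlgebraic ℚ (p.coeff k)) {x : ℝ} (hx : p.eval x = 0) :
    IsAlgebraic ℚ x := by
  classical
  set L := algebraicClosure ℚ ℝ with hL
  have hmem : ∀ k, p.coeff k ∈ L := fun k => mem_algebraicClosure_iff.mpr (halg k)
  set q : Polynomial L := ∑ i ∈ p.support, Polynomial.monomial i (⟨p.coeff i, hmem i⟩ : L)
    with hqdef
  have hc : ∀ n, ((q.coeff n : L) : ℝ) = p.coeff n := by
    intro n
    simp only [hqdef, Polynomial.finset_sum_coeff, Polynomial.coeff_monomial,
      Finset.sum_ite_eq', Polynomial.mem_support_iff]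
    split_ifs with h
    · rfl
    · simp [not_not.mp h]
  have hq0 : q ≠ 0 := by
    intro h
    apply hp
    ext n
    have := hc n
    rw [h] at this
    simpa using this.symm
  have hmap : q.map (algebraMap L ℝ) = p := by
    ext n
    rw [Polynomial.coeff_map]
    exact hc n
  have haev : Polynomial.aeval x q = 0 := by
    rw [Polynomial.aeval_def, Polynomial.eval₂_eq_eval_map, hmap, hx]
  have halgL : IsAlgebraic L x := ⟨q, hq0, haev⟩
  have hint : IsIntegral (↥L) x := halgL.isIntegral
  haveI : Algebra.IsAlgebraic ℚ L := algebraicClosure.isAlgebraic ℚ ℝ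
  haveI : Algebra.IsIntegral ℚ L := Algebra.IsAlgebraic.isIntegral
  exact (isIntegral_trans (A := ↥L) x hint).isAlgebraic

lemma exists_pos_le_abs_eval (p : Polynomial ℝ) {K : Set ℝ} (hK : IsCompact K)
    (h : ∀ x ∈ K, p.eval x ≠ 0) : ∃ η > 0, ∀ x ∈ K, η ≤ |p.eval x| := by
  rcases K.eq_empty_or_nonempty with h0 | h0
  · exact ⟨1, one_pos, by simp [h0]⟩
  · obtain ⟨x0, hx0, hmin⟩ := hK.exists_isMinOn h0
      ((continuous_abs.comp (p.continuous)).continuousOn)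
    exact ⟨|p.eval x0|, abs_pos.mpr (h x0 hx0), fun x hx => hmin hx⟩

lemma exists_lower_bound_near_root (p : Polynomial ℝ) (hp : p ≠ 0) (r : ℝ) :
    ∃ c > 0, ∃ ρ > 0, ρ ≤ 1 ∧
      ∀ x, |x - r| ≤ ρ → c * |x - r| ^ p.natDegree ≤ |p.eval x| := by
  classical
  set k := p.rootMultiplicity r with hk
  set g := p /ₘ (X - C r) ^ k with hg
  have hfact : ∀ x, p.eval x = (x - r) ^ k * g.eval x := by
    intro x
    conv_lhs => rw [← Polynomial.pow_mul_divByMonic_rootMultiplicity_eq p r]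
    simp [hg, hk]
  have hg0 : g.eval r ≠ 0 := Polynomial.eval_divByMonic_pow_rootMultiplicity_ne_zero r hp
  have hcont : ContinuousAt (fun x => g.eval x) r := (Polynomial.continuous g).continuousAt
  rw [Metric.continuousAt_iff] at hcont
  obtain ⟨δ, hδ, hδ'⟩ := hcont (|g.eval r| / 2) (by positivity)
  refine ⟨|g.eval r| / 2, by positivity, min (δ / 2) 1, by positivity, min_le_right _ _, ?_⟩
  intro x hx
  have hxδ : dist x r < δ := by
    rw [Real.dist_eq]
    calc |x - r| ≤ min (δ/2) 1 := hx
    _ ≤ δ/2 := min_le_left _ _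
    _ < δ := by linarith
  have hge : |g.eval r| / 2 ≤ |g.eval x| := by
    have := hδ' hxδ
    rw [Real.dist_eq] at this
    have h2 := abs_sub_abs_le_abs_sub (g.eval r) (g.eval x)
    rw [abs_sub_comm] at this
    linarith
  have hkd : k ≤ p.natDegree := by
    have hdvd := Polynomial.pow_rootMultiplicity_dvd p r
    have := Polynomial.natDegree_le_of_dvd hdvd hp
    simpa using this
  have hx1 : |x - r| ≤ 1 := le_trans hx (min_le_right _ _)
  have hpow : |x - r| ^ p.natDegree ≤ |x - r| ^ k :=
    pow_le_pow_of_le_one (abs_nonneg _) hx1 hkd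
  calc |g.eval r| / 2 * |x - r| ^ p.natDegree
      ≤ |g.eval x| * |x - r| ^ k := by
        apply mul_le_mul hge hpow (by positivity) (abs_nonneg _)
    _ = |p.eval x| := by rw [hfact x, abs_mul, abs_pow, mul_comm]

lemma exp_bound_eventually {C δ : ℝ} (hC : 0 < C) (hδ : 0 < δ) {η : ℝ} (hη : 0 < η) (T : ℝ) :
    ∃ T' ≥ T, ∀ t > T', C * Real.exp (-δ * t) < η := by
  refine ⟨max T (Real.log (C / η) / δ), le_max_left _ _, fun t ht => ?_⟩
  have h1 : Real.log (C / η) / δ < t := lt_of_le_of_lt (le_max_right _ _) ht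
  have h2 : Real.log (C / η) < δ * t := by
    rw [div_lt_iff₀ hδ] at h1; linarith
  have h3 : C / η < Real.exp (δ * t) := by
    calc C / η ≤ Real.exp (Real.log (C / η)) := Real.le_exp_log _
    _ < Real.exp (δ * t) := Real.exp_lt_exp.mpr h2
  have hepos := Real.exp_pos (δ * t)
  rw [div_lt_iff₀ hη] at h3
  have he : Real.exp (-δ * t) = (Real.exp (δ * t))⁻¹ := by
    rw [← Real.exp_neg]; ring_nf
  rw [he, mul_inv_lt_iff₀ hepos]
  linarith

lemma stepA (T₁ : ℝ) (y : ℝ → ℝ) (m : ℕ) (hm : 0 < m) (Q : Fin m → Polynomial ℝ)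
    (β : Fin m → ℝ) (hβ : StrictAnti β) (B : ℝ)
    (hyB : ∀ t > T₁, y t ∈ Set.Icc (-B) B)
    (heq : ∀ t > T₁, (∑ j, (Q j).eval (y t) * Real.exp (β j * t)) = 0) :
    ∃ δ > 0, ∃ C > 0, ∀ t, max T₁ 0 < t →
      |(Q ⟨0, hm⟩).eval (y t)| ≤ C * Real.exp (-δ * t) := by
  classical
  set i0 : Fin m := ⟨0, hm⟩ with hi0
  have hM : ∀ j : Fin m, ∃ Mj : ℝ, ∀ x ∈ Set.Icc (-B) B, |(Q j).eval x| ≤ Mj := by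
    intro j
    obtain ⟨Mj, hMj⟩ := (isCompact_Icc (a := -B) (b := B)).exists_bound_of_continuousOn
      ((Q j).continuous.continuousOn)
    exact ⟨Mj, fun x hx => by simpa [Real.norm_eq_abs] using hMj x hx⟩
  choose M hM using hM
  set C : ℝ := 1 + ∑ j, |M j| with hC
  have hCpos : 0 < C := by
    have : (0:ℝ) ≤ ∑ j, |M j| := Finset.sum_nonneg fun j _ => abs_nonneg _
    linarith
  have key : ∀ δ : ℝ, (∀ j : Fin m, j ≠ i0 → β j ≤ β i0 - δ) →
      ∀ t, max T₁ 0 < t → |(Q i0).eval (y t)| ≤ C * Real.exp (-δ * t) := by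
    intro δ hδle t ht
    have ht1 : T₁ < t := lt_of_le_of_lt (le_max_left _ _) ht
    have ht0 : (0:ℝ) < t := lt_of_le_of_lt (le_max_right _ _) ht
    have hsum := heq t ht1
    rw [← Finset.add_sum_erase Finset.univ _ (Finset.mem_univ i0)] at hsum
    have hmain : (Q i0).eval (y t) * Real.exp (β i0 * t)
        = - ∑ j ∈ Finset.univ.erase i0, (Q j).eval (y t) * Real.exp (β j * t) := by
      linarith
    have hexp := Real.exp_pos (β i0 * t)
    rw [← mul_le_mul_iff_of_pos_right hexp]
    calc |(Q i0).eval (y t)| * Real.exp (β i0 * t)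
        = |(Q i0).eval (y t) * Real.exp (β i0 * t)| := by
          rw [abs_mul, abs_of_pos hexp]
      _ = |∑ j ∈ Finset.univ.erase i0, (Q j).eval (y t) * Real.exp (β j * t)| := by
          rw [hmain, abs_neg]
      _ ≤ ∑ j ∈ Finset.univ.erase i0, |(Q j).eval (y t) * Real.exp (β j * t)| :=
          Finset.abs_sum_le_sum_abs _ _
      _ ≤ ∑ j ∈ Finset.univ.erase i0, |M j| * Real.exp ((β i0 - δ) * t) := by
          apply Finset.sum_le_sum
          intro j hj
          rw [abs_mul, abs_of_pos (Real.exp_pos _)]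
          have h1 : |(Q j).eval (y t)| ≤ |M j| :=
            le_trans (hM j _ (hyB t ht1)) (le_abs_self _)
          have h2 : Real.exp (β j * t) ≤ Real.exp ((β i0 - δ) * t) := by
            apply Real.exp_le_exp.mpr
            exact mul_le_mul_of_nonneg_right (hδle j (Finset.ne_of_mem_erase hj)) ht0.le
          exact mul_le_mul h1 h2 (Real.exp_pos _).le (abs_nonneg _)
      _ = (∑ j ∈ Finset.univ.erase i0, |M j|) * Real.exp ((β i0 - δ) * t) := by
          rw [Finset.sum_mul]
      _ ≤ C * Real.exp ((β i0 - δ) * t) := by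
          apply mul_le_mul_of_nonneg_right _ (Real.exp_pos _).le
          have : ∑ j ∈ Finset.univ.erase i0, |M j| ≤ ∑ j, |M j| :=
            Finset.sum_le_sum_of_subset_of_nonneg (Finset.erase_subset _ _)
              (fun j _ _ => abs_nonneg _)
          linarith
      _ = C * Real.exp (-δ * t) * Real.exp (β i0 * t) := by
          rw [mul_assoc, ← Real.exp_add]; ring_nf
  by_cases h1 : 1 < m
  · set i1 : Fin m := ⟨1, h1⟩ with hi1
    refine ⟨β i0 - β i1, sub_pos.mpr (hβ (by simp [hi0, hi1, Fin.lt_def])), C, hCpos, ?_⟩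
    apply key
    intro j hj
    have : i1 ≤ j := by
      rw [Fin.le_def]
      show 1 ≤ j.val
      have : j.val ≠ 0 := fun h => hj (Fin.ext h)
      omega
    have := hβ.antitone this
    linarith
  · refine ⟨1, one_pos, C, hCpos, ?_⟩
    apply key
    intro j hj
    exfalso
    apply hj
    apply Fin.ext
    show j.val = 0
    omega

/-- Lemma 5 (convergence): if y is bounded and continuous on (T₁,∞), the Q_j are nonzero
polynomials with real algebraic coefficients, β₁ > … > β_m, and
Q₁(y(t))e^{β₁t} + … + Q_m(y(t))e^{β_m t} = 0 for all t > T₁, then y(t) converges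
exponentially fast to some root y* of Q₁, which is a real algebraic number. -/
theorem bounded_solution_converges_to_algebraic_root
    (T₁ : ℝ) (y : ℝ → ℝ)
    (hbdd : ∃ B : ℝ, ∀ t > T₁, |y t| ≤ B)
    (hcont : ContinuousOn y (Set.Ioi T₁))
    (m : ℕ) (hm : 0 < m) (Q : Fin m → Polynomial ℝ) (hQ : ∀ j, Q j ≠ 0)
    (hQalg : ∀ j k, IsAlgebraic ℚ ((Q j).coeff k))
    (β : Fin m → ℝ) (hβ : StrictAnti β)
    (heq : ∀ t > T₁, (∑ j, (Q j).eval (y t) * Real.exp (β j * t)) = 0) :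
    ∃ ystar : ℝ, (Q ⟨0, hm⟩).eval ystar = 0 ∧ IsAlgebraic ℚ ystar ∧
      (∃ ε > 0, ∃ T₂ > T₁, ∀ t > T₂, |y t - ystar| < Real.exp (-ε * t)) ∧
      Filter.Tendsto y Filter.atTop (nhds ystar) := by
  classical
  obtain ⟨B₀, hB₀⟩ := hbdd
  set B := max B₀ 0 with hBdef
  have hyB : ∀ t > T₁, y t ∈ Set.Icc (-B) B := by
    intro t ht
    have h := abs_le.mp (hB₀ t ht)
    have hle : B₀ ≤ B := le_max_left _ _
    exact ⟨by linarith [h.1], by linarith [h.2]⟩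
  obtain ⟨δ, hδ, C, hCpos, hsmall⟩ := stepA T₁ y m hm Q β hβ B hyB heq
  set i0 : Fin m := ⟨0, hm⟩ with hi0
  set P := Q i0 with hPdef
  have hP : P ≠ 0 := hQ i0
  set Z := {x : ℝ | P.eval x = 0} with hZdef
  have hZfin : Z.Finite := by
    have := Polynomial.finite_setOf_isRoot (p := P) hP
    simpa [Polynomial.IsRoot, hZdef] using this
  by_cases hZne : Z.Nonempty
  swap
  · exfalso
    rw [Set.not_nonempty_iff_eq_empty] at hZne
    have hnoroot : ∀ x ∈ Set.Icc (-B) B, P.eval x ≠ 0 := by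
      intro x _ hx
      have : x ∈ Z := hx
      rw [hZne] at this
      exact this
    obtain ⟨η, hη, hηle⟩ := exists_pos_le_abs_eval P isCompact_Icc hnoroot
    obtain ⟨T', hT', hlt⟩ := exp_bound_eventually hCpos hδ hη (max T₁ 0)
    have ht : T' + 1 > T' := lt_add_one T'
    have htm : max T₁ 0 < T' + 1 := lt_of_le_of_lt hT' ht
    have h1 := hsmall (T' + 1) htm
    have h2 := hlt (T' + 1) ht
    have h3 := hηle (y (T' + 1)) (hyB (T' + 1) (lt_of_le_of_lt (le_max_left _ _) htm))
    linarith
  -- gap between roots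
  have hgap : ∃ γ > 0, ∀ r ∈ Z, ∀ r' ∈ Z, r ≠ r' → γ ≤ |r - r'| := by
    set F := hZfin.toFinset with hF
    set D := ((F ×ˢ F).filter (fun p : ℝ × ℝ => p.1 ≠ p.2)).image
      (fun p : ℝ × ℝ => |p.1 - p.2|) with hD
    by_cases hDne : D.Nonempty
    · refine ⟨D.min' hDne, ?_, ?_⟩
      · obtain ⟨p, hp, hpe⟩ := Finset.mem_image.mp (D.min'_mem hDne)
        have hne : p.1 ≠ p.2 := (Finset.mem_filter.mp hp).2
        rw [← hpe]
        exact abs_sub_pos.mpr hne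
      · intro r hr r' hr' hne
        apply D.min'_le
        apply Finset.mem_image.mpr
        exact ⟨(r, r'), Finset.mem_filter.mpr ⟨Finset.mem_product.mpr
          ⟨hZfin.mem_toFinset.mpr hr, hZfin.mem_toFinset.mpr hr'⟩, hne⟩, rfl⟩
    · refine ⟨1, one_pos, fun r hr r' hr' hne => absurd ?_ hDne⟩
      exact ⟨|r - r'|, Finset.mem_image.mpr ⟨(r, r'), Finset.mem_filter.mpr
        ⟨Finset.mem_product.mpr ⟨hZfin.mem_toFinset.mpr hr, hZfin.mem_toFinset.mpr hr'⟩,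
          hne⟩, rfl⟩⟩
  obtain ⟨γ, hγ, hγsep⟩ := hgap
  set ρ : ℝ := min (γ / 2) 1 with hρdef
  have hρpos : 0 < ρ := lt_min (by linarith) one_pos
  have hρ1 : ρ ≤ 1 := min_le_right _ _
  have hργ : ρ ≤ γ / 2 := min_le_left _ _
  -- stage 1: y(t) eventually within ρ of some root
  have habs : Continuous fun x : ℝ => |x - (0:ℝ)| := by fun_prop
  have hclosed : ∀ r : ℝ, ∀ σ : ℝ, IsClosed {x : ℝ | σ ≤ |x - r|} :=
    fun r σ => isClosed_le continuous_const (by fun_prop)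
  set K₁ := Set.Icc (-B) B ∩ {x : ℝ | ∀ r ∈ Z, ρ ≤ |x - r|} with hK₁
  have hK₁c : IsCompact K₁ := by
    apply isCompact_Icc.inter_right
    have : {x : ℝ | ∀ r ∈ Z, ρ ≤ |x - r|} = ⋂ r ∈ Z, {x : ℝ | ρ ≤ |x - r|} := by
      ext x; simp
    rw [this]
    exact isClosed_biInter fun r _ => hclosed r ρ
  have hK₁nr : ∀ x ∈ K₁, P.eval x ≠ 0 := by
    intro x hx hroot
    have := hx.2 x hroot
    simp at this
    linarith
  obtain ⟨η₁, hη₁, hη₁le⟩ := exists_pos_le_abs_eval P hK₁c hK₁nr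
  obtain ⟨T₀, hT₀ge, hT₀lt⟩ := exp_bound_eventually hCpos hδ hη₁ (max T₁ 0 + 1)
  have hT₀T₁ : T₁ < T₀ := by
    have := le_max_left T₁ 0
    linarith
  have hT₀0 : max T₁ 0 < T₀ := by linarith
  have hnear : ∀ t > T₀, ∃ r ∈ Z, |y t - r| < ρ := by
    intro t ht
    by_contra hcon
    push_neg at hcon
    have hmem : y t ∈ K₁ := ⟨hyB t (by linarith), hcon⟩
    have h1 := hη₁le (y t) hmem
    have h2 := hsmall t (by linarith)
    have h3 := hT₀lt t ht
    linarith
  obtain ⟨rstar, hrZ, hrnear⟩ := hnear (T₀ + 1) (lt_add_one _)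
  have hrooteval : P.eval rstar = 0 := hrZ
  -- stage 1b: y(t) stays near rstar
  have hstay : ∀ t > T₀, |y t - rstar| < ρ := by
    by_contra hcon
    push_neg at hcon
    obtain ⟨t, ht, htfar⟩ := hcon
    have hpc : IsPreconnected (y '' Set.Ioi T₀) :=
      (isPreconnected_Ioi).image y (hcont.mono (Set.Ioi_subset_Ioi hT₀T₁.le))
    set U₁ := Metric.ball rstar ρ with hU₁
    set U₂ := ⋃ r ∈ Z \ {rstar}, Metric.ball r ρ with hU₂
    have hcover : y '' Set.Ioi T₀ ⊆ U₁ ∪ U₂ := by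
      rintro _ ⟨s, hs, rfl⟩
      obtain ⟨r, hr, hrn⟩ := hnear s hs
      by_cases hrr : r = rstar
      · left
        rw [Metric.mem_ball, Real.dist_eq, ← hrr]
        exact hrn
      · right
        exact Set.mem_biUnion (⟨hr, hrr⟩ : r ∈ Z \ {rstar})
          (by rw [Metric.mem_ball, Real.dist_eq]; exact hrn)
    have h1 : (y '' Set.Ioi T₀ ∩ U₁).Nonempty := by
      refine ⟨y (T₀ + 1), ⟨T₀ + 1, Set.mem_Ioi.mpr (lt_add_one _), rfl⟩, ?_⟩
      rw [hU₁, Metric.mem_ball, Real.dist_eq]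
      exact hrnear
    have h2 : (y '' Set.Ioi T₀ ∩ U₂).Nonempty := by
      obtain ⟨r, hr, hrn⟩ := hnear t ht
      have hrr : r ≠ rstar := by
        intro h
        rw [h] at hrn
        linarith
      exact ⟨y t, ⟨t, Set.mem_Ioi.mpr ht, rfl⟩, Set.mem_biUnion (⟨hr, hrr⟩ : r ∈ Z \ {rstar})
        (by rw [Metric.mem_ball, Real.dist_eq]; exact hrn)⟩
    obtain ⟨z, _, hz1, hz2⟩ := hpc U₁ U₂ Metric.isOpen_ball
      (isOpen_biUnion fun r _ => Metric.isOpen_ball) hcover h1 h2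
    obtain ⟨r, hr, hzball⟩ := Set.mem_iUnion₂.mp hz2
    have hsep := hγsep rstar hrZ r hr.1 (fun h => hr.2 h.symm)
    have d1 : dist z rstar < ρ := Metric.mem_ball.mp hz1
    have d2 : dist z r < ρ := Metric.mem_ball.mp hzball
    have : dist rstar r ≤ dist rstar z + dist z r := dist_triangle _ _ _
    rw [dist_comm rstar z] at this
    have : |rstar - r| < 2 * ρ := by
      rw [← Real.dist_eq]
      linarith
    linarith
  -- stage 2: quantitative convergence
  obtain ⟨c, hc, ρ'', hρ''pos, hρ''1, hlow⟩ := exists_lower_bound_near_root P hP rstar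
  set ρ' : ℝ := min ρ'' ρ with hρ'def
  have hρ'pos : 0 < ρ' := lt_min hρ''pos hρpos
  set A := Set.Icc (-B) B ∩ ({x : ℝ | ρ' ≤ |x - rstar|} ∩ {x : ℝ | |x - rstar| ≤ ρ}) with hA
  have hAc : IsCompact A := by
    apply isCompact_Icc.inter_right
    exact (hclosed rstar ρ').inter (isClosed_le (by fun_prop) continuous_const)
  have hAnr : ∀ x ∈ A, P.eval x ≠ 0 := by
    intro x hx hroot
    have hxZ : x ∈ Z := hroot
    by_cases hxr : x = rstar
    · have := hx.2.1
      rw [hxr] at this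
      simp at this
      linarith
    · have hsep := hγsep x hxZ rstar hrZ hxr
      have h5 : |x - rstar| ≤ ρ := hx.2.2
      linarith
  obtain ⟨η₂, hη₂, hη₂le⟩ := exists_pos_le_abs_eval P hAc hAnr
  obtain ⟨T₀', hT₀'ge, hT₀'lt⟩ := exp_bound_eventually hCpos hδ hη₂ (T₀ + 1)
  have hclose : ∀ t > T₀', |y t - rstar| < ρ' := by
    intro t ht
    by_contra hcon
    push_neg at hcon
    have h' := hstay t (by linarith)
    have hmem : y t ∈ A := ⟨hyB t (by linarith), hcon, h'.le⟩
    have h1 := hη₂le (y t) hmem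
    have h2 := hsmall t (by linarith)
    have h3 := hT₀'lt t ht
    linarith
  -- degree positive
  set d := P.natDegree with hd
  have hdpos : 0 < d := by
    by_contra h
    push_neg at h
    have hd0 : P.natDegree = 0 := by omega
    have := Polynomial.eq_C_of_natDegree_eq_zero hd0
    apply hP
    rw [this]
    have : P.coeff 0 = 0 := by
      have := hrooteval
      rw [Polynomial.eq_C_of_natDegree_eq_zero hd0] at this
      simpa using this
    rw [this]
    simp
  -- final epsilon and T₂
  set ε := δ / (2 * d) with hεdef
  have hdR : (0:ℝ) < (d:ℝ) := Nat.cast_pos.mpr hdpos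
  have hε : 0 < ε := by positivity
  obtain ⟨T₂, hT₂ge, hT₂lt⟩ := exp_bound_eventually (div_pos hCpos hc) (half_pos hδ)
    one_pos (T₀' + 1)
  have hT₂T₁ : T₁ < T₂ := by linarith
  have hmainbound : ∀ t > T₂, |y t - rstar| < Real.exp (-ε * t) := by
    intro t ht
    have h₁ : t > T₀' := by linarith
    have hcl := hclose t h₁
    have hlb := hlow (y t) (le_of_lt (lt_of_lt_of_le hcl (min_le_left _ _)))
    have hub := hsmall t (by linarith)
    have hxd : |y t - rstar| ^ d * c ≤ C * Real.exp (-δ * t) := by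
      rw [mul_comm]
      linarith
    have hx : |y t - rstar| ^ d ≤ C / c * Real.exp (-δ * t) := by
      rw [div_mul_eq_mul_div, le_div_iff₀ hc]
      exact hxd
    have h2 := hT₂lt t ht
    have hsplit : C / c * Real.exp (-δ * t)
        = (C / c * Real.exp (-(δ/2) * t)) * Real.exp (-(δ/2) * t) := by
      rw [mul_assoc, ← Real.exp_add]
      ring_nf
    have h3 : |y t - rstar| ^ d < Real.exp (-(δ/2) * t) := by
      calc |y t - rstar| ^ d ≤ C / c * Real.exp (-δ * t) := hx
        _ = (C / c * Real.exp (-(δ/2) * t)) * Real.exp (-(δ/2) * t) := hsplit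
        _ < 1 * Real.exp (-(δ/2) * t) := by
            apply mul_lt_mul_of_pos_right _ (Real.exp_pos _)
            exact h2
        _ = Real.exp (-(δ/2) * t) := one_mul _
    have h4 : Real.exp (-(δ/2) * t) = (Real.exp (-ε * t)) ^ d := by
      rw [← Real.exp_nat_mul]
      congr 1
      rw [hεdef]
      field_simp
    by_contra hcon
    push_neg at hcon
    have h5 : Real.exp (-ε * t) ^ d ≤ |y t - rstar| ^ d :=
      pow_le_pow_left₀ (Real.exp_pos _).le hcon d
    rw [← h4] at h5
    linarith
  refine ⟨rstar, hrooteval, isAlgebraic_of_root_algCoeffs P hP (fun k => hQalg i0 k)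
    hrooteval, ⟨ε, hε, T₂, hT₂T₁, hmainbound⟩, ?_⟩
  -- tendsto
  have h0 : Filter.Tendsto (fun t => Real.exp (-ε * t)) Filter.atTop (nhds 0) := by
    apply Real.tendsto_exp_atBot.comp
    exact (Filter.tendsto_const_mul_atBot_of_neg (neg_lt_zero.mpr hε)).mpr Filter.tendsto_id
  have h1 : Filter.Tendsto (fun t => |y t - rstar|) Filter.atTop (nhds 0) := by
    apply squeeze_zero' (Filter.Eventually.of_forall fun t => abs_nonneg _)
      ((Filter.eventually_gt_atTop T₂).mono fun t ht => (hmainbound t ht).le) h0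
  rw [tendsto_iff_dist_tendsto_zero]
  simpa [Real.dist_eq] using h1
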